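/- For any positive integers q and n, and any n×n integer matrix M satisfying M·1 = Mᵀ·1 (i.e., the vector of row sums of M equals the vector of column sums of M), there exists a q-dimensional tensor C with all modes of size n and integer entries such that for every pair of indices i₁ < i₂ in {1,…,q}, the matrix obtained by summing the entries of C over all modes other than i₁ and i₂ (with i₁ indexing the rows and i₂ the columns) equals M. -/
import Mathlib

private def splitE (q n : ℕ) (k : Fin q) :
    (Fin q → Fin n) ≃ Fin n × ({m : Fin q // m ≠ k} → Fin n) where
  toFun x := (x k, fun m => x m.1)
  invFun p m := if h : m = k then p.1 else p.2 ⟨m, h⟩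
  left_inv x := by
    funext m
    by_cases h : m = k
    · subst h; simp
    · simp [h]
  right_inv p := by
    ext m
    · simp
    · simp [m.2]

private lemma sum_split (q n : ℕ) (k : Fin q) (F : (Fin q → Fin n) → ℤ) :
    ∑ x : Fin q → Fin n, F x
      = ∑ y : {m : Fin q // m ≠ k} → Fin n, ∑ t : Fin n,
          F (fun m => if h : m = k then t else y ⟨m, h⟩) := by
  rw [← Equiv.sum_comp (splitE q n k).symm F, Fintype.sum_prod_type, Finset.sum_comm]
  rfl

private lemma proj_zero (q n : ℕ) (Z : Fin n → Fin n → ℤ)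
    (hrow : ∀ u, ∑ t, Z u t = 0) (hcol : ∀ u, ∑ t, Z t u = 0)
    (z0 : Fin n) (i j i₁ i₂ : Fin q) (hij : i ≠ j) (k : Fin q)
    (hk : k = i ∨ k = j) (hk1 : k ≠ i₁) (hk2 : k ≠ i₂) (a b : Fin n) :
    ∑ x : Fin q → Fin n,
      (if (x i₁ = a ∧ x i₂ = b) ∧ (∀ m, m ≠ i → m ≠ j → x m = z0)
        then Z (x i) (x j) else 0) = 0 := by
  classical
  rw [sum_split q n k]
  apply Finset.sum_eq_zero
  intro y _
  set x : Fin n → Fin q → Fin n := fun t m => if h : m = k then t else y ⟨m, h⟩ with hx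
  have hxk : ∀ t, x t k = t := fun t => dif_pos rfl
  have hxm : ∀ t m (h : m ≠ k), x t m = y ⟨m, h⟩ := fun t m h => dif_neg h
  set D : Prop := (y ⟨i₁, fun h => hk1 h.symm⟩ = a ∧ y ⟨i₂, fun h => hk2 h.symm⟩ = b) ∧
      (∀ m (h : m ≠ k), m ≠ i → m ≠ j → y ⟨m, h⟩ = z0) with hD
  have hcond : ∀ t, ((x t i₁ = a ∧ x t i₂ = b) ∧ (∀ m, m ≠ i → m ≠ j → x t m = z0)) ↔ D := by
    intro t
    constructor
    · rintro ⟨⟨h1, h2⟩, h3⟩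
      refine ⟨⟨?_, ?_⟩, fun m h hmi hmj => ?_⟩
      · rw [← hxm t i₁ (fun h => hk1 h.symm)]; exact h1
      · rw [← hxm t i₂ (fun h => hk2 h.symm)]; exact h2
      · rw [← hxm t m h]; exact h3 m hmi hmj
    · rintro ⟨⟨h1, h2⟩, h3⟩
      refine ⟨⟨?_, ?_⟩, fun m hmi hmj => ?_⟩
      · rw [hxm t i₁ (fun h => hk1 h.symm)]; exact h1
      · rw [hxm t i₂ (fun h => hk2 h.symm)]; exact h2
      · have hmk : m ≠ k := by rcases hk with rfl | rfl; exact hmi; exact hmj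
        rw [hxm t m hmk]; exact h3 m hmk hmi hmj
  rcases hk with rfl | rfl
  · -- k = i
    have hjk : j ≠ k := fun h => hij h.symm
    calc ∑ t : Fin n, (if (x t i₁ = a ∧ x t i₂ = b) ∧ (∀ m, m ≠ k → m ≠ j → x t m = z0)
            then Z (x t k) (x t j) else 0)
        = ∑ t : Fin n, (if D then Z t (y ⟨j, hjk⟩) else 0) := by
          apply Finset.sum_congr rfl
          intro t _
          rw [if_congr (hcond t) (by rw [hxk, hxm t j hjk]) rfl]
      _ = 0 := by
          by_cases hDp : D
          · simp only [if_pos hDp]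
            exact hcol _
          · simp [hDp]
  · -- k = j
    have hik : i ≠ k := hij
    calc ∑ t : Fin n, (if (x t i₁ = a ∧ x t i₂ = b) ∧ (∀ m, m ≠ i → m ≠ k → x t m = z0)
            then Z (x t i) (x t k) else 0)
        = ∑ t : Fin n, (if D then Z (y ⟨i, hik⟩) t else 0) := by
          apply Finset.sum_congr rfl
          intro t _
          rw [if_congr (hcond t) (by rw [hxk, hxm t i hik]) rfl]
      _ = 0 := by
          by_cases hDp : D
          · simp only [if_pos hDp]
            exact hrow _
          · simp [hDp]

private lemma proj_single (q n : ℕ) (Z : Fin n → Fin n → ℤ) (z0 : Fin n)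
    (i₁ i₂ : Fin q) (h12 : i₁ ≠ i₂) (a b : Fin n) :
    ∑ x : Fin q → Fin n,
      (if (x i₁ = a ∧ x i₂ = b) ∧ (∀ m, m ≠ i₁ → m ≠ i₂ → x m = z0)
        then Z (x i₁) (x i₂) else 0) = Z a b := by
  classical
  set x0 : Fin q → Fin n := fun m => if m = i₁ then a else if m = i₂ then b else z0 with hx0
  have h1 : x0 i₁ = a := if_pos rfl
  have h2 : x0 i₂ = b := by
    simp only [hx0]
    rw [if_neg (fun h => h12 h.symm)]
    simp
  rw [Finset.sum_eq_single x0]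
  · rw [if_pos ⟨⟨h1, h2⟩, fun m hm1 hm2 => by simp only [hx0]; rw [if_neg hm1, if_neg hm2]⟩,
      h1, h2]
  · intro x _ hne
    rw [if_neg]
    rintro ⟨⟨c1, c2⟩, c3⟩
    apply hne
    funext m
    by_cases hm1 : m = i₁
    · subst hm1; rw [c1, h1]
    · by_cases hm2 : m = i₂
      · subst hm2; rw [c2, h2]
      · have hz : x0 m = z0 := by
          simp only [hx0]
          rw [if_neg hm1, if_neg hm2]
        rw [c3 m hm1 hm2, hz]
  · intro h; exact absurd (Finset.mem_univ x0) h

/-- Theorem: for any `n × n` integer matrix `M` whose row sums equal its column sums,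
and any positive dimension `q`, there is a `q`-dimensional `M`-crystal: a tensor
`C : [n]^q → ℤ` whose projection onto every increasing pair of modes equals `M`. -/
theorem crystals_exist (q n : ℕ) (hq : 0 < q) (hn : 0 < n)
    (M : Matrix (Fin n) (Fin n) ℤ)
    (hM : ∀ a : Fin n, (∑ b, M a b) = ∑ b, M b a) :
    ∃ C : (Fin q → Fin n) → ℤ,
      ∀ i₁ i₂ : Fin q, i₁ < i₂ → ∀ a b : Fin n,
        (∑ x : Fin q → Fin n, if x i₁ = a ∧ x i₂ = b then C x else 0) = M a b := by
  classical
  obtain ⟨z0⟩ : Nonempty (Fin n) := ⟨⟨0, hn⟩⟩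
  set r : Fin n → ℤ := fun c => ∑ d, M c d with hr
  set Z : Fin n → Fin n → ℤ := fun c d => M c d - if c = d then r c else 0 with hZdef
  have hrow : ∀ u : Fin n, (∑ t, Z u t) = 0 := by
    intro u
    have h0 : (∑ t, Z u t) = (∑ t, M u t) - ∑ t, (if u = t then r u else 0) := by
      rw [← Finset.sum_sub_distrib]
    rw [h0]
    simp [hr]
  have hcol : ∀ u : Fin n, (∑ t, Z t u) = 0 := by
    intro u
    have h0 : (∑ t, Z t u) = (∑ t, M t u) - ∑ t, (if t = u then r t else 0) := by
      rw [← Finset.sum_sub_distrib]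
    rw [h0, ← hM u]
    simp [hr]
  set C : (Fin q → Fin n) → ℤ := fun x =>
      (∑ c, if x = (fun _ => c) then r c else 0)
        + ∑ p : Fin q × Fin q,
            if p.1 < p.2 ∧ (∀ m, m ≠ p.1 → m ≠ p.2 → x m = z0)
            then Z (x p.1) (x p.2) else 0 with hC
  refine ⟨C, ?_⟩
  intro i₁ i₂ h12 a b
  simp only [hC]
  have hsplit :
      (∑ x : Fin q → Fin n, if x i₁ = a ∧ x i₂ = b then
          (∑ c, if x = (fun _ => c) then r c else 0)
            + ∑ p : Fin q × Fin q,
                (if p.1 < p.2 ∧ (∀ m, m ≠ p.1 → m ≠ p.2 → x m = z0)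
                  then Z (x p.1) (x p.2) else 0) else 0)
        = (∑ x : Fin q → Fin n, if x i₁ = a ∧ x i₂ = b then
            (∑ c, if x = (fun _ => c) then r c else 0) else 0)
          + (∑ x : Fin q → Fin n, if x i₁ = a ∧ x i₂ = b then
              (∑ p : Fin q × Fin q, if p.1 < p.2 ∧ (∀ m, m ≠ p.1 → m ≠ p.2 → x m = z0)
                then Z (x p.1) (x p.2) else 0) else 0) := by
    rw [← Finset.sum_add_distrib]
    apply Finset.sum_congr rfl
    intro x _
    by_cases hP : x i₁ = a ∧ x i₂ = b <;> simp [hP]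
  rw [hsplit]
  have step1 : (∑ x : Fin q → Fin n, if x i₁ = a ∧ x i₂ = b then
        (∑ c, if x = (fun _ => c) then r c else 0) else 0)
      = (if a = b then r a else 0) := by
    have h1 : ∀ x : Fin q → Fin n, (if x i₁ = a ∧ x i₂ = b then
          (∑ c, if x = (fun _ => c) then r c else 0) else 0)
        = ∑ c, (if x = (fun _ => c) then (if c = a ∧ c = b then r c else 0) else 0) := by
      intro x
      by_cases hP : x i₁ = a ∧ x i₂ = b
      · rw [if_pos hP]
        apply Finset.sum_congr rfl
        intro c _
        by_cases hxc : x = (fun _ => c)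
        · rw [if_pos hxc, if_pos hxc, if_pos]
          subst hxc
          exact hP
        · rw [if_neg hxc, if_neg hxc]
      · rw [if_neg hP]
        symm
        apply Finset.sum_eq_zero
        intro c _
        by_cases hxc : x = (fun _ => c)
        · rw [if_pos hxc, if_neg]
          rintro ⟨ha', hb'⟩
          exact hP (by subst hxc; exact ⟨ha', hb'⟩)
        · rw [if_neg hxc]
    rw [Finset.sum_congr rfl (fun x _ => h1 x), Finset.sum_comm]
    have h2 : ∀ c : Fin n,
        (∑ x : Fin q → Fin n, if x = (fun _ => c)
            then (if c = a ∧ c = b then r c else 0) else 0)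
          = (if c = a ∧ c = b then r c else 0) := by
      intro c
      rw [Finset.sum_ite_eq' Finset.univ (fun _ => c)
        (fun _ => if c = a ∧ c = b then r c else 0)]
      simp
    rw [Finset.sum_congr rfl (fun c _ => h2 c)]
    by_cases hab : a = b
    · subst hab
      simp
    · rw [if_neg hab]
      apply Finset.sum_eq_zero
      intro c _
      rw [if_neg]
      rintro ⟨rfl, rfl⟩
      exact hab rfl
  have step2 : (∑ x : Fin q → Fin n, if x i₁ = a ∧ x i₂ = b then
        (∑ p : Fin q × Fin q, if p.1 < p.2 ∧ (∀ m, m ≠ p.1 → m ≠ p.2 → x m = z0)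
            then Z (x p.1) (x p.2) else 0) else 0)
      = Z a b := by
    have h1 : ∀ x : Fin q → Fin n, (if x i₁ = a ∧ x i₂ = b then
          (∑ p : Fin q × Fin q, if p.1 < p.2 ∧ (∀ m, m ≠ p.1 → m ≠ p.2 → x m = z0)
              then Z (x p.1) (x p.2) else 0) else 0)
        = ∑ p : Fin q × Fin q, (if p.1 < p.2 then
            (if (x i₁ = a ∧ x i₂ = b) ∧ (∀ m, m ≠ p.1 → m ≠ p.2 → x m = z0)
              then Z (x p.1) (x p.2) else 0) else 0) := by
      intro x
      by_cases hP : x i₁ = a ∧ x i₂ = b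
      · rw [if_pos hP]
        apply Finset.sum_congr rfl
        intro p _
        by_cases hlt : p.1 < p.2
        · by_cases hQ : ∀ m, m ≠ p.1 → m ≠ p.2 → x m = z0 <;> simp [hlt, hQ, hP]
        · simp [hlt]
      · rw [if_neg hP]
        symm
        apply Finset.sum_eq_zero
        intro p _
        simp [hP]
    rw [Finset.sum_congr rfl (fun x _ => h1 x), Finset.sum_comm]
    have h2 : ∀ p : Fin q × Fin q,
        (∑ x : Fin q → Fin n, if p.1 < p.2 then
            (if (x i₁ = a ∧ x i₂ = b) ∧ (∀ m, m ≠ p.1 → m ≠ p.2 → x m = z0)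
              then Z (x p.1) (x p.2) else 0) else 0)
          = if p = (i₁, i₂) then Z a b else 0 := by
      intro p
      by_cases hlt : p.1 < p.2
      · simp only [if_pos hlt]
        by_cases hp : p = (i₁, i₂)
        · subst hp
          rw [if_pos rfl]
          exact proj_single q n Z z0 i₁ i₂ (ne_of_lt h12) a b
        · rw [if_neg hp]
          obtain ⟨k, hkor, hk1, hk2⟩ : ∃ k, (k = p.1 ∨ k = p.2) ∧ k ≠ i₁ ∧ k ≠ i₂ := by
            by_cases h1' : p.1 = i₁
            · refine ⟨p.2, Or.inr rfl, ?_, ?_⟩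
              · have hi : i₁ < p.2 := h1' ▸ hlt
                exact ne_of_gt hi
              · intro h
                exact hp (Prod.ext h1' h)
            · by_cases h2' : p.1 = i₂
              · have hi : i₂ < p.2 := h2' ▸ hlt
                exact ⟨p.2, Or.inr rfl, ne_of_gt (lt_trans h12 hi), ne_of_gt hi⟩
              · exact ⟨p.1, Or.inl rfl, h1', h2'⟩
          exact proj_zero q n Z hrow hcol z0 p.1 p.2 i₁ i₂ (ne_of_lt hlt) k hkor hk1 hk2 a b
      · have hp : p ≠ (i₁, i₂) := fun h => hlt (by rw [h]; exact h12)
        rw [if_neg hp]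
        apply Finset.sum_eq_zero
        intro x _
        rw [if_neg hlt]
    rw [Finset.sum_congr rfl (fun p _ => h2 p)]
    simp
  rw [step1, step2]
  by_cases hab : a = b
  · subst hab
    simp only [hZdef, if_pos rfl]
    ring
  · simp [hZdef, hab]
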